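/- With the notation and hypotheses of the ansatz (φ with |φ - H + 1/(απ·)| ≤ K₁/x² for |x| ≥ 1 and ψ with |ψ - K₂/·| ≤ K₃/x² for |x| ≥ 1, both bounded), the limit function h_δ(x) = lim_{n→∞} s_{δ,n}(x) satisfies |h_δ(x) - x| ≤ C for all x ∈ ℝ, with C independent of x. -/

import Mathlib

open Filter Finset

/-- The Heaviside function. -/
noncomputable def Heaviside (x : ℝ) : ℝ := if 0 ≤ x then 1 else 0

lemma heaviside_abs_le (x : ℝ) : |Heaviside x| ≤ 1 := by
  unfold Heaviside; split <;> norm_num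

lemma erase_Icc_succ (K : ℕ) :
    (Finset.Icc (-((K:ℤ) + 1)) ((K:ℤ) + 1)).erase 0 =
      insert ((K:ℤ)+1) (insert (-((K:ℤ)+1)) ((Finset.Icc (-(K:ℤ)) K).erase 0)) := by
  ext i
  simp only [Finset.mem_erase, Finset.mem_Icc, Finset.mem_insert]
  omega

set_option maxHeartbeats 1000000 in
lemma pair_bounds (t : ℝ) (ht : |t| ≤ 1/2) (K : ℕ) :
    |∑ j ∈ (Finset.Icc (-(K:ℤ)) K).erase 0, (t - (j:ℝ))⁻¹| ≤ 2 - ((K:ℝ) + 1/2)⁻¹ ∧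
    ∑ j ∈ (Finset.Icc (-(K:ℤ)) K).erase 0, ((t - (j:ℝ))^2)⁻¹ ≤ 12 - 6 * ((K:ℝ) + 1/2)⁻¹ := by
  induction K with
  | zero =>
      norm_num
  | succ K ih =>
      obtain ⟨ih1, ih2⟩ := ih
      have hKc : ((K+1 : ℕ) : ℤ) = (K:ℤ) + 1 := by push_cast; ring
      have hset : (Finset.Icc (-((K+1:ℕ):ℤ)) ((K+1:ℕ):ℤ)).erase 0 =
          insert ((K:ℤ)+1) (insert (-((K:ℤ)+1)) ((Finset.Icc (-(K:ℤ)) K).erase 0)) := by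
        rw [hKc]; exact erase_Icc_succ K
      have hm1 : ((K:ℤ)+1) ∉ insert (-((K:ℤ)+1)) ((Finset.Icc (-(K:ℤ)) K).erase 0) := by
        simp only [Finset.mem_insert, Finset.mem_erase, Finset.mem_Icc]
        omega
      have hm2 : (-((K:ℤ)+1)) ∉ (Finset.Icc (-(K:ℤ)) K).erase 0 := by
        simp only [Finset.mem_erase, Finset.mem_Icc]
        omega
      set j : ℝ := (K:ℝ) + 1 with hj
      set u : ℝ := (K:ℝ) + 1/2 with hu
      set v : ℝ := (K:ℝ) + 3/2 with hv
      have hj1 : (1:ℝ) ≤ j := by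
        rw [hj]; linarith [(Nat.cast_nonneg K : (0:ℝ) ≤ K)]
      have hupos : (0:ℝ) < u := by rw [hu]; positivity
      have hvpos : (0:ℝ) < v := by rw [hv]; positivity
      have ht1 : t ≤ 1/2 := (abs_le.1 ht).2
      have ht2 : -(1/2) ≤ t := (abs_le.1 ht).1
      have hd1 : u ≤ j - t := by rw [hu, hj]; linarith
      have hd2 : u ≤ j + t := by rw [hu, hj]; linarith
      have hne3 : j - t ≠ 0 := (lt_of_lt_of_le hupos hd1).ne'
      have hne4 : j + t ≠ 0 := (lt_of_lt_of_le hupos hd2).ne'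
      have hne1 : t - j ≠ 0 := fun h => hne3 (by linarith [sub_eq_zero.1 h])
      have hne2 : t + j ≠ 0 := fun h => hne4 (by linarith [add_eq_zero_iff_eq_neg.1 h])
      have pairc : (t - j)⁻¹ + (t + j)⁻¹ = -(2*t) / ((j - t)*(j + t)) := by
        field_simp
        ring
      have hden : u * v ≤ (j - t)*(j + t) := by
        have h1 : (j - t)*(j+t) = j^2 - t^2 := by ring
        have h2 : t^2 ≤ 1/4 := by nlinarith
        rw [h1, hu, hv, hj]; nlinarith
      have hdenpos : (0:ℝ) < (j - t)*(j + t) := mul_pos (lt_of_lt_of_le hupos hd1) (lt_of_lt_of_le hupos hd2)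
      have pair1 : |(t - j)⁻¹ + (t + j)⁻¹| ≤ (u * v)⁻¹ := by
        rw [pairc, abs_div, abs_neg, abs_of_pos hdenpos, div_le_iff₀ hdenpos]
        have h2t : |2*t| ≤ 1 := by rw [abs_mul]; rw [show |(2:ℝ)| = 2 by norm_num]; linarith
        calc |2*t| ≤ 1 := h2t
          _ = (u*v)⁻¹ * (u*v) := (inv_mul_cancel₀ (by positivity)).symm
          _ ≤ (u*v)⁻¹ * ((j - t)*(j + t)) :=
              mul_le_mul_of_nonneg_left hden (by positivity)
      have htele : (u * v)⁻¹ = u⁻¹ - v⁻¹ := by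
        rw [hu, hv]; field_simp; ring
      have hsq1 : ((t - j)^2)⁻¹ ≤ (u^2)⁻¹ := by
        apply inv_anti₀ (by positivity)
        calc u^2 ≤ (j-t)^2 := pow_le_pow_left₀ hupos.le hd1 2
          _ = (t-j)^2 := by ring
      have hsq2 : ((t + j)^2)⁻¹ ≤ (u^2)⁻¹ := by
        apply inv_anti₀ (by positivity)
        calc u^2 ≤ (j+t)^2 := pow_le_pow_left₀ hupos.le hd2 2
          _ = (t+j)^2 := by ring
      have hsqtele : 2 * (u^2)⁻¹ ≤ 6 * (u⁻¹ - v⁻¹) := by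
        rw [← htele]
        have h3 : u*v ≤ 3 * u^2 := by
          rw [hu, hv]; nlinarith [(Nat.cast_nonneg K : (0:ℝ) ≤ K)]
        have h4 : (3*u^2)⁻¹ ≤ (u*v)⁻¹ :=
          inv_anti₀ (by positivity) h3
        have h5 : (3*u^2)⁻¹ = 3⁻¹ * (u^2)⁻¹ := by rw [mul_inv]
        linarith
      have hucast : ((K+1:ℕ):ℝ) + 1/2 = v := by rw [hv]; push_cast; ring
      constructor
      · rw [hset, Finset.sum_insert hm1, Finset.sum_insert hm2, hucast]
        have e1 : ((((K:ℤ)+1):ℤ):ℝ) = j := by rw [hj]; push_cast; ring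
        have e2 : (((-((K:ℤ)+1)):ℤ):ℝ) = -j := by rw [hj]; push_cast; ring
        rw [e1, e2]
        have : t - -j = t + j := by ring
        rw [this]
        calc |(t - j)⁻¹ + ((t + j)⁻¹ + ∑ i ∈ (Finset.Icc (-(K:ℤ)) K).erase 0, (t - (i:ℝ))⁻¹)|
            = |((t - j)⁻¹ + (t + j)⁻¹) + ∑ i ∈ (Finset.Icc (-(K:ℤ)) K).erase 0, (t - (i:ℝ))⁻¹| := by
              rw [add_assoc]
          _ ≤ |(t - j)⁻¹ + (t + j)⁻¹| + |∑ i ∈ (Finset.Icc (-(K:ℤ)) K).erase 0, (t - (i:ℝ))⁻¹| :=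
              abs_add_le _ _
          _ ≤ (u*v)⁻¹ + (2 - u⁻¹) := add_le_add pair1 ih1
          _ = 2 - v⁻¹ := by rw [htele]; ring
      · rw [hset, Finset.sum_insert hm1, Finset.sum_insert hm2, hucast]
        have e1 : ((((K:ℤ)+1):ℤ):ℝ) = j := by rw [hj]; push_cast; ring
        have e2 : (((-((K:ℤ)+1)):ℤ):ℝ) = -j := by rw [hj]; push_cast; ring
        rw [e1, e2]
        have : t - -j = t + j := by ring
        rw [this]
        have : ((t - j)^2)⁻¹ + (((t + j)^2)⁻¹ + ∑ i ∈ (Finset.Icc (-(K:ℤ)) K).erase 0, ((t - (i:ℝ))^2)⁻¹)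
            ≤ 2 * (u^2)⁻¹ + (12 - 6 * u⁻¹) := by
          linarith
        calc ((t - j)^2)⁻¹ + (((t + j)^2)⁻¹ + ∑ i ∈ (Finset.Icc (-(K:ℤ)) K).erase 0, ((t - (i:ℝ))^2)⁻¹)
            ≤ 2 * (u^2)⁻¹ + (12 - 6 * u⁻¹) := this
          _ ≤ 6 * (u⁻¹ - v⁻¹) + (12 - 6 * u⁻¹) := by linarith
          _ = 12 - 6 * v⁻¹ := by ring

set_option maxHeartbeats 4000000 in
theorem hull_function_close_to_identity
    (φ ψ : ℝ → ℝ) (α K₁ K₂ K₃ Mφ Mψ p₀ L δ : ℝ)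
    (hαpos : 0 < α) (hK₁ : 0 < K₁) (hK₃ : 0 < K₃)
    (hφbd : ∀ x : ℝ, |φ x| ≤ Mφ)
    (hφdecay : ∀ x : ℝ, 1 ≤ |x| →
      |φ x - Heaviside x + 1 / (α * Real.pi * x)| ≤ K₁ / x ^ 2)
    (hψbd : ∀ x : ℝ, |ψ x| ≤ Mψ)
    (hψdecay : ∀ x : ℝ, 1 ≤ |x| → |ψ x - K₂ / x| ≤ K₃ / x ^ 2)
    (hp₀ : p₀ ≠ 0) (hδ : δ ∈ Set.Ioc (0:ℝ) (1 / (2 * |p₀|))) :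
    ∃ C > 0, ∀ (x l : ℝ),
      Tendsto (fun n : ℕ =>
          δ * L / α +
          (∑ i ∈ Finset.Icc (-(n:ℤ)) (n:ℤ),
            (φ ((x - i) / (δ * |p₀|)) + δ * ψ ((x - i) / (δ * |p₀|)))) - n)
        atTop (nhds l) →
      |l - x| ≤ C := by
  obtain ⟨hδ0, hδ2⟩ := hδ
  have hp : (0:ℝ) < |p₀| := abs_pos.2 hp₀
  set a : ℝ := δ * |p₀| with ha
  have ha0 : 0 < a := mul_pos hδ0 hp
  have ha2 : a ≤ 1/2 := by
    have h := mul_le_mul_of_nonneg_right hδ2 hp.le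
    have heq : 1 / (2 * |p₀|) * |p₀| = 1/2 := by field_simp
    rw [heq] at h
    exact h
  set c : ℝ := δ * K₂ - 1 / (α * Real.pi) with hc
  set B : ℝ := K₁ + δ * K₃ with hB
  have hB0 : 0 < B := by rw [hB]; positivity
  set D : ℝ := |c| * a + 2 * B * a^2 with hD
  have hD0 : 0 ≤ D := by rw [hD]; positivity
  have hMφ0 : 0 ≤ Mφ := le_trans (abs_nonneg _) (hφbd 0)
  have hMψ0 : 0 ≤ Mψ := le_trans (abs_nonneg _) (hψbd 0)
  set C : ℝ := |δ * L / α| + Mφ + δ * Mψ + 2 * |c| * a + 12 * B * a^2 + 4 with hCdef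
  have hC0 : 0 < C := by
    have h1 : 0 ≤ |δ * L / α| := abs_nonneg _
    have h2 : 0 ≤ δ * Mψ := mul_nonneg hδ0.le hMψ0
    have h3 : 0 ≤ 2 * |c| * a := by positivity
    have h4 : 0 ≤ 12 * B * a^2 := by positivity
    rw [hCdef]; linarith
  -- key pointwise decay estimate
  have hkey : ∀ z : ℝ, 1/2 ≤ |z| →
      |φ (z/a) + δ * ψ (z/a) - Heaviside (z/a) - c * a / z| ≤ B * a^2 / z^2 := by
    intro z hz
    have hz0 : z ≠ 0 := by
      intro h; rw [h, abs_zero] at hz; linarith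
    have haz : a ≤ |z| := le_trans ha2 hz
    have hy : 1 ≤ |z/a| := by
      rw [abs_div, abs_of_pos ha0, le_div_iff₀ ha0, one_mul]; exact haz
    have h1 := hφdecay (z/a) hy
    have h2 := hψdecay (z/a) hy
    have hE : φ (z/a) + δ * ψ (z/a) - Heaviside (z/a) - c * a / z
        = (φ (z/a) - Heaviside (z/a) + 1/(α * Real.pi * (z/a)))
          + δ * (ψ (z/a) - K₂ / (z/a)) := by
      rw [hc]
      field_simp
      ring
    rw [hE]
    have step : |(φ (z/a) - Heaviside (z/a) + 1/(α * Real.pi * (z/a)))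
          + δ * (ψ (z/a) - K₂ / (z/a))|
        ≤ K₁ / (z/a)^2 + δ * (K₃ / (z/a)^2) := by
      calc |(φ (z/a) - Heaviside (z/a) + 1/(α * Real.pi * (z/a)))
          + δ * (ψ (z/a) - K₂ / (z/a))|
          ≤ |φ (z/a) - Heaviside (z/a) + 1/(α * Real.pi * (z/a))|
            + |δ * (ψ (z/a) - K₂ / (z/a))| := abs_add_le _ _
        _ = |φ (z/a) - Heaviside (z/a) + 1/(α * Real.pi * (z/a))|
            + δ * |ψ (z/a) - K₂ / (z/a)| := by
              rw [abs_mul, abs_of_pos hδ0]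
        _ ≤ K₁ / (z/a)^2 + δ * (K₃ / (z/a)^2) :=
              add_le_add h1 (mul_le_mul_of_nonneg_left h2 hδ0.le)
    have hfin : K₁ / (z/a)^2 + δ * (K₃ / (z/a)^2) = B * a^2 / z^2 := by
      rw [hB]
      field_simp
    rw [← hfin]
    exact step
  -- coarse bound away from the center
  have hkey2 : ∀ z : ℝ, 1/2 ≤ |z| →
      |φ (z/a) + δ * ψ (z/a) - Heaviside (z/a)| ≤ D / |z| := by
    intro z hz
    have hz0 : (0:ℝ) < |z| := lt_of_lt_of_le (by norm_num) hz
    have h := hkey z hz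
    have h1 : |φ (z/a) + δ * ψ (z/a) - Heaviside (z/a)|
        ≤ B * a^2 / z^2 + |c * a / z| := by
      calc |φ (z/a) + δ * ψ (z/a) - Heaviside (z/a)|
          = |(φ (z/a) + δ * ψ (z/a) - Heaviside (z/a) - c * a / z) + c * a / z| := by
            ring_nf
        _ ≤ |φ (z/a) + δ * ψ (z/a) - Heaviside (z/a) - c * a / z| + |c * a / z| :=
            abs_add_le _ _
        _ ≤ B * a^2 / z^2 + |c * a / z| := by linarith
    have h2 : |c * a / z| = |c| * a / |z| := by
      rw [abs_div, abs_mul, abs_of_pos ha0]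
    have h3 : B * a^2 / z^2 ≤ 2 * B * a^2 / |z| := by
      have hzne : z ≠ 0 := by
        intro hh; rw [hh, abs_zero] at hz; linarith
      have hz2 : (0:ℝ) < z^2 := by positivity
      rw [div_le_div_iff₀ hz2 hz0]
      have key : 0 ≤ B * a^2 * |z| * (2 * |z| - 1) :=
        mul_nonneg (by positivity) (by linarith)
      rw [← sq_abs z]
      nlinarith [key]
    have h4 : |c| * a / |z| + 2 * B * a^2 / |z| = D / |z| := by
      rw [hD, ← add_div]
    linarith
  refine ⟨C, hC0, ?_⟩
  intro x l hl
  -- setup around x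
  set m : ℤ := round x with hm
  have ht : |x - m| ≤ 1/2 := abs_sub_round x
  have hfl1 : (⌊x⌋ : ℝ) ≤ x := Int.floor_le x
  have hfl2 : x - 1 < (⌊x⌋ : ℝ) := Int.sub_one_lt_floor x
  have hmx1 : (m:ℝ) - 1/2 ≤ x := by
    have := (abs_le.1 ht).1; linarith
  have hmx2 : x ≤ (m:ℝ) + 1/2 := by
    have := (abs_le.1 ht).2; linarith
  have hflm1 : ⌊x⌋ ≤ m := by
    have : (⌊x⌋:ℝ) < (m:ℝ) + 1 := by linarith
    exact_mod_cast Int.lt_add_one_iff.1 (by exact_mod_cast this)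
  have hflm2 : m - 1 ≤ ⌊x⌋ := by
    have : (m:ℝ) - 2 < (⌊x⌋:ℝ) := by linarith
    have h' : m - 2 < ⌊x⌋ := by exact_mod_cast this
    omega
  set N : ℕ := m.natAbs + 1 + ⌈2 * (m.natAbs:ℝ) * D⌉₊ with hN
  have main : ∀ n : ℕ, N ≤ n →
      |(δ * L / α +
        (∑ i ∈ Finset.Icc (-(n:ℤ)) (n:ℤ),
          (φ ((x - i) / a) + δ * ψ ((x - i) / a))) - n) - x| ≤ C := by
    intro n hn
    have hmn : m.natAbs + 1 ≤ n := le_trans (by omega) hn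
    set K : ℕ := n - m.natAbs with hK
    have hKn : K + m.natAbs = n := Nat.sub_add_cancel (by omega)
    have hceK : ⌈2 * (m.natAbs:ℝ) * D⌉₊ ≤ K := by omega
    have hKce : 2 * (m.natAbs:ℝ) * D ≤ (K:ℝ) := by
      calc 2 * (m.natAbs:ℝ) * D ≤ (⌈2 * (m.natAbs:ℝ) * D⌉₊ : ℝ) := Nat.le_ceil _
        _ ≤ (K:ℝ) := by exact_mod_cast Nat.cast_le.2 hceK
    have hnK : (K:ℤ) + (m.natAbs:ℤ) = (n:ℤ) := by exact_mod_cast hKn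
    have hfln1 : -(n:ℤ) ≤ ⌊x⌋ := by omega
    have hfln2 : ⌊x⌋ ≤ (n:ℤ) := by omega
    -- the fluctuation part
    set G : ℤ → ℝ := fun i =>
      φ ((x - i) / a) + δ * ψ ((x - i) / a) - Heaviside ((x - i) / a) with hG
    -- Heaviside counting
    have hHsum : ∑ i ∈ Finset.Icc (-(n:ℤ)) (n:ℤ), Heaviside ((x - i)/a)
        = (⌊x⌋:ℝ) + n + 1 := by
      have hterm : ∀ i ∈ Finset.Icc (-(n:ℤ)) (n:ℤ),
          Heaviside ((x - i)/a) = if i ≤ ⌊x⌋ then (1:ℝ) else 0 := by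
        intro i _
        unfold Heaviside
        refine if_congr ?_ rfl rfl
        rw [le_div_iff₀ ha0, zero_mul, sub_nonneg]
        exact (Int.le_floor).symm
      rw [Finset.sum_congr rfl hterm, Finset.sum_boole]
      have hfilter : (Finset.Icc (-(n:ℤ)) (n:ℤ)).filter (fun i => i ≤ ⌊x⌋)
          = Finset.Icc (-(n:ℤ)) ⌊x⌋ := by
        ext i
        simp only [Finset.mem_filter, Finset.mem_Icc]
        omega
      rw [hfilter, Int.card_Icc]
      have e1 : ((⌊x⌋ + 1 - -(n:ℤ)).toNat : ℤ) = ⌊x⌋ + n + 1 := by omega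
      have e2 : (((⌊x⌋ + 1 - -(n:ℤ)).toNat : ℕ) : ℝ) = (((⌊x⌋ + 1 - -(n:ℤ)).toNat : ℤ) : ℝ) := by
        push_cast; ring
      rw [e2, e1]
      push_cast; ring
    -- decompose the sum
    have hFdecomp : ∑ i ∈ Finset.Icc (-(n:ℤ)) (n:ℤ),
        (φ ((x - i) / a) + δ * ψ ((x - i) / a))
        = (∑ i ∈ Finset.Icc (-(n:ℤ)) (n:ℤ), Heaviside ((x - i)/a))
          + ∑ i ∈ Finset.Icc (-(n:ℤ)) (n:ℤ), G i := by
      rw [← Finset.sum_add_distrib]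
      refine Finset.sum_congr rfl ?_
      intro i _
      simp only [hG]
      ring
    have hsub : Finset.Icc (m - (K:ℤ)) (m + K) ⊆ Finset.Icc (-(n:ℤ)) (n:ℤ) := by
      intro i hi
      simp only [Finset.mem_Icc] at *
      omega
    have hgsplit : ∑ i ∈ Finset.Icc (-(n:ℤ)) (n:ℤ), G i
        = (∑ i ∈ Finset.Icc (-(n:ℤ)) (n:ℤ) \ Finset.Icc (m - (K:ℤ)) (m + K), G i)
          + ∑ i ∈ Finset.Icc (m - (K:ℤ)) (m + K), G i :=
      (Finset.sum_sdiff hsub).symm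
    have hmap : Finset.Icc (m - (K:ℤ)) (m + K)
        = (Finset.Icc (-(K:ℤ)) (K:ℤ)).map (addRightEmbedding m) := by
      rw [Finset.map_add_right_Icc]
      congr 1 <;> ring
    have hcent : ∑ i ∈ Finset.Icc (m - (K:ℤ)) (m + K), G i
        = ∑ j ∈ Finset.Icc (-(K:ℤ)) (K:ℤ), G (j + m) := by
      rw [hmap, Finset.sum_map]
      rfl
    have h0mem : (0:ℤ) ∈ Finset.Icc (-(K:ℤ)) (K:ℤ) := by
      simp only [Finset.mem_Icc]
      omega
    have hinsert : ∑ j ∈ Finset.Icc (-(K:ℤ)) (K:ℤ), G (j + m)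
        = G m + ∑ j ∈ (Finset.Icc (-(K:ℤ)) (K:ℤ)).erase 0, G (j + m) := by
      conv_lhs => rw [← Finset.insert_erase h0mem]
      rw [Finset.sum_insert (Finset.notMem_erase _ _), zero_add]
    -- per-term bound on the symmetric window
    have hAj : ∀ j ∈ (Finset.Icc (-(K:ℤ)) (K:ℤ)).erase 0,
        |G (j + m) - c * a * ((x - m) - (j:ℝ))⁻¹| ≤ B * a^2 * (((x - m) - (j:ℝ))^2)⁻¹ := by
      intro j hj
      have hj0 : j ≠ 0 := (Finset.mem_erase.1 hj).1
      have hj1 : (1:ℝ) ≤ |(j:ℝ)| := by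
        have : (1:ℤ) ≤ |j| := Int.one_le_abs hj0
        calc (1:ℝ) ≤ ((|j|:ℤ):ℝ) := by exact_mod_cast this
          _ = |(j:ℝ)| := by push_cast; ring
      have hz : 1/2 ≤ |(x - m) - (j:ℝ)| := by
        have tri : |(j:ℝ)| ≤ |(j:ℝ) - (x - m)| + |x - m| := by
          calc |(j:ℝ)| = |((j:ℝ) - (x - m)) + (x - m)| := by ring_nf
            _ ≤ |(j:ℝ) - (x - m)| + |x - m| := abs_add_le _ _
        rw [abs_sub_comm]
        linarith
      have h := hkey ((x - m) - (j:ℝ)) hz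
      have hrw : x - ((j + m : ℤ):ℝ) = (x - m) - (j:ℝ) := by push_cast; ring
      simp only [hG, hrw]
      rw [show c * a * ((x - m) - (j:ℝ))⁻¹ = c * a / ((x - m) - (j:ℝ)) from
            (div_eq_mul_inv _ _).symm,
          show B * a^2 * (((x - m) - (j:ℝ))^2)⁻¹ = B * a^2 / ((x - m) - (j:ℝ))^2 from
            (div_eq_mul_inv _ _).symm]
      exact h
    have hpair := pair_bounds (x - m) ht K
    have hinv0 : (0:ℝ) ≤ ((K:ℝ) + 1/2)⁻¹ := by positivity
    have hT : |∑ j ∈ (Finset.Icc (-(K:ℤ)) (K:ℤ)).erase 0, ((x - m) - (j:ℝ))⁻¹| ≤ 2 := by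
      linarith [hpair.1]
    have hQ : ∑ j ∈ (Finset.Icc (-(K:ℤ)) (K:ℤ)).erase 0, (((x - m) - (j:ℝ))^2)⁻¹ ≤ 12 := by
      linarith [hpair.2]
    have hcentbd : |∑ j ∈ (Finset.Icc (-(K:ℤ)) (K:ℤ)).erase 0, G (j + m)|
        ≤ 2 * |c| * a + 12 * B * a^2 := by
      have hsplitA : ∑ j ∈ (Finset.Icc (-(K:ℤ)) (K:ℤ)).erase 0, G (j + m)
          = c * a * (∑ j ∈ (Finset.Icc (-(K:ℤ)) (K:ℤ)).erase 0, ((x - m) - (j:ℝ))⁻¹)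
            + ∑ j ∈ (Finset.Icc (-(K:ℤ)) (K:ℤ)).erase 0,
                (G (j + m) - c * a * ((x - m) - (j:ℝ))⁻¹) := by
        rw [Finset.mul_sum, ← Finset.sum_add_distrib]
        refine Finset.sum_congr rfl ?_
        intro j _
        ring
      rw [hsplitA]
      have b1 : |c * a * (∑ j ∈ (Finset.Icc (-(K:ℤ)) (K:ℤ)).erase 0, ((x - m) - (j:ℝ))⁻¹)|
          ≤ |c| * a * 2 := by
        rw [abs_mul, abs_mul, abs_of_pos ha0]
        exact mul_le_mul_of_nonneg_left hT (by positivity)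
      have b2 : |∑ j ∈ (Finset.Icc (-(K:ℤ)) (K:ℤ)).erase 0,
            (G (j + m) - c * a * ((x - m) - (j:ℝ))⁻¹)| ≤ B * a^2 * 12 := by
        calc |∑ j ∈ (Finset.Icc (-(K:ℤ)) (K:ℤ)).erase 0,
              (G (j + m) - c * a * ((x - m) - (j:ℝ))⁻¹)|
            ≤ ∑ j ∈ (Finset.Icc (-(K:ℤ)) (K:ℤ)).erase 0,
              |G (j + m) - c * a * ((x - m) - (j:ℝ))⁻¹| := Finset.abs_sum_le_sum_abs _ _
          _ ≤ ∑ j ∈ (Finset.Icc (-(K:ℤ)) (K:ℤ)).erase 0,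
              B * a^2 * (((x - m) - (j:ℝ))^2)⁻¹ := Finset.sum_le_sum hAj
          _ = B * a^2 * ∑ j ∈ (Finset.Icc (-(K:ℤ)) (K:ℤ)).erase 0,
              (((x - m) - (j:ℝ))^2)⁻¹ := (Finset.mul_sum _ _ _).symm
          _ ≤ B * a^2 * 12 := mul_le_mul_of_nonneg_left hQ (by positivity)
      calc |c * a * (∑ j ∈ (Finset.Icc (-(K:ℤ)) (K:ℤ)).erase 0, ((x - m) - (j:ℝ))⁻¹)
            + ∑ j ∈ (Finset.Icc (-(K:ℤ)) (K:ℤ)).erase 0,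
                (G (j + m) - c * a * ((x - m) - (j:ℝ))⁻¹)|
          ≤ |c * a * (∑ j ∈ (Finset.Icc (-(K:ℤ)) (K:ℤ)).erase 0, ((x - m) - (j:ℝ))⁻¹)|
            + |∑ j ∈ (Finset.Icc (-(K:ℤ)) (K:ℤ)).erase 0,
                (G (j + m) - c * a * ((x - m) - (j:ℝ))⁻¹)| := abs_add_le _ _
        _ ≤ |c| * a * 2 + B * a^2 * 12 := add_le_add b1 b2
        _ = 2 * |c| * a + 12 * B * a^2 := by ring
    -- remainder
    have hRbd : ∀ i ∈ Finset.Icc (-(n:ℤ)) (n:ℤ) \ Finset.Icc (m - (K:ℤ)) (m + K),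
        |G i| ≤ D / ((K:ℝ) + 1/2) := by
      intro i hi
      rw [Finset.mem_sdiff, Finset.mem_Icc, Finset.mem_Icc] at hi
      have hm1 : m ≤ (m.natAbs:ℤ) := Int.le_natAbs
      have hm2 : -(m.natAbs:ℤ) ≤ m := by
        have := Int.le_natAbs (a := -m)
        omega
      have hcases : i ≤ m - (K:ℤ) - 1 ∨ m + (K:ℤ) + 1 ≤ i := by
        rcases hi with ⟨⟨h1, h2⟩, h3⟩
        by_contra hcon
        push_neg at hcon
        exact h3 ⟨by omega, by omega⟩
      have hdist : (K:ℤ) + 1 ≤ |i - m| := by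
        rcases hcases with hcc | hcc
        · rw [abs_of_nonpos (by omega)]; omega
        · rw [abs_of_nonneg (by omega)]; omega
      have hdistR : (K:ℝ) + 1 ≤ |(i:ℝ) - (m:ℝ)| := by
        have h' : (((K:ℤ) + 1 : ℤ) : ℝ) ≤ ((|i - m| : ℤ) : ℝ) := Int.cast_le.2 hdist
        push_cast at h'
        exact h'
      have hz : (K:ℝ) + 1/2 ≤ |x - i| := by
        have tri : |(i:ℝ) - (m:ℝ)| ≤ |(i:ℝ) - x| + |x - (m:ℝ)| := abs_sub_le _ _ _
        rw [abs_sub_comm (i:ℝ) x] at tri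
        linarith
      have hz2 : 1/2 ≤ |x - i| := by
        have : (0:ℝ) ≤ (K:ℝ) := Nat.cast_nonneg K
        linarith
      have h := hkey2 (x - i) hz2
      simp only [hG]
      calc |φ ((x - i) / a) + δ * ψ ((x - i) / a) - Heaviside ((x - i) / a)|
          ≤ D / |x - i| := h
        _ ≤ D / ((K:ℝ) + 1/2) := by
            apply div_le_div_of_nonneg_left hD0 (by positivity) hz
    have hRcard : ((Finset.Icc (-(n:ℤ)) (n:ℤ) \ Finset.Icc (m - (K:ℤ)) (m + K)).card : ℝ)
        = 2 * (m.natAbs : ℝ) := by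
      rw [Finset.card_sdiff_of_subset hsub, Int.card_Icc, Int.card_Icc]
      have e1 : ((n:ℤ) + 1 - -(n:ℤ)).toNat = 2*n + 1 := by omega
      have e2 : ((m + (K:ℤ)) + 1 - (m - (K:ℤ))).toNat = 2*K + 1 := by omega
      rw [e1, e2]
      have e3 : 2*n + 1 - (2*K + 1) = 2 * m.natAbs := by omega
      rw [e3]
      push_cast
      ring
    have hKhalf : (0:ℝ) < (K:ℝ) + 1/2 := by positivity
    have hRsum : |∑ i ∈ Finset.Icc (-(n:ℤ)) (n:ℤ) \ Finset.Icc (m - (K:ℤ)) (m + K), G i|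
        ≤ 1 := by
      calc |∑ i ∈ Finset.Icc (-(n:ℤ)) (n:ℤ) \ Finset.Icc (m - (K:ℤ)) (m + K), G i|
          ≤ ∑ i ∈ Finset.Icc (-(n:ℤ)) (n:ℤ) \ Finset.Icc (m - (K:ℤ)) (m + K), |G i| :=
            Finset.abs_sum_le_sum_abs _ _
        _ ≤ (Finset.Icc (-(n:ℤ)) (n:ℤ) \ Finset.Icc (m - (K:ℤ)) (m + K)).card
              • (D / ((K:ℝ) + 1/2)) := Finset.sum_le_card_nsmul _ _ _ hRbd
        _ = ((Finset.Icc (-(n:ℤ)) (n:ℤ) \ Finset.Icc (m - (K:ℤ)) (m + K)).card : ℝ)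
              * (D / ((K:ℝ) + 1/2)) := nsmul_eq_mul _ _
        _ = 2 * (m.natAbs : ℝ) * D / ((K:ℝ) + 1/2) := by rw [hRcard]; ring
        _ ≤ 1 := by
            rw [div_le_one hKhalf]
            calc 2 * (m.natAbs:ℝ) * D ≤ (K:ℝ) := hKce
              _ ≤ (K:ℝ) + 1/2 := by linarith
    have hGm : |G m| ≤ Mφ + δ * Mψ + 1 := by
      simp only [hG]
      have h1 : |φ ((x - (m:ℝ)) / a)| ≤ Mφ := hφbd _
      have h2 : |ψ ((x - (m:ℝ)) / a)| ≤ Mψ := hψbd _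
      have h3 : |Heaviside ((x - (m:ℝ)) / a)| ≤ 1 := heaviside_abs_le _
      have h4 : |δ * ψ ((x - (m:ℝ)) / a)| ≤ δ * Mψ := by
        rw [abs_mul, abs_of_pos hδ0]
        exact mul_le_mul_of_nonneg_left h2 hδ0.le
      calc |φ ((x - (m:ℝ)) / a) + δ * ψ ((x - (m:ℝ)) / a) - Heaviside ((x - (m:ℝ)) / a)|
          = |(φ ((x - (m:ℝ)) / a) + δ * ψ ((x - (m:ℝ)) / a)) + (-(Heaviside ((x - (m:ℝ)) / a)))| := by
            rw [← sub_eq_add_neg]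
        _ ≤ |φ ((x - (m:ℝ)) / a) + δ * ψ ((x - (m:ℝ)) / a)| + |(-(Heaviside ((x - (m:ℝ)) / a)))| :=
            abs_add_le _ _
        _ ≤ Mφ + δ * Mψ + 1 := by
            rw [abs_neg]
            have := abs_add_le (φ ((x - (m:ℝ)) / a)) (δ * ψ ((x - (m:ℝ)) / a))
            linarith
    have hfloor1 : |(⌊x⌋:ℝ) + 1 - x| ≤ 1 := by
      rw [abs_le]
      constructor <;> linarith
    have hexpr : (δ * L / α +
          (∑ i ∈ Finset.Icc (-(n:ℤ)) (n:ℤ),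
            (φ ((x - i) / a) + δ * ψ ((x - i) / a))) - n) - x
        = δ * L / α + ((⌊x⌋:ℝ) + 1 - x)
          + ((∑ i ∈ Finset.Icc (-(n:ℤ)) (n:ℤ) \ Finset.Icc (m - (K:ℤ)) (m + K), G i)
             + (G m + ∑ j ∈ (Finset.Icc (-(K:ℤ)) (K:ℤ)).erase 0, G (j + m))) := by
      rw [hFdecomp, hHsum, hgsplit, hcent, hinsert]
      ring
    rw [hexpr]
    have habs5 : ∀ p q r s u : ℝ, |p + q + (r + (s + u))| ≤ |p| + |q| + |r| + |s| + |u| := by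
      intro p q r s u
      calc |p + q + (r + (s + u))| ≤ |p + q| + |r + (s + u)| := abs_add_le _ _
        _ ≤ (|p| + |q|) + (|r| + |s + u|) := add_le_add (abs_add_le _ _) (abs_add_le _ _)
        _ ≤ (|p| + |q|) + (|r| + (|s| + |u|)) := by linarith [abs_add_le s u]
        _ = |p| + |q| + |r| + |s| + |u| := by ring
    have := habs5 (δ * L / α) ((⌊x⌋:ℝ) + 1 - x)
        (∑ i ∈ Finset.Icc (-(n:ℤ)) (n:ℤ) \ Finset.Icc (m - (K:ℤ)) (m + K), G i)
        (G m) (∑ j ∈ (Finset.Icc (-(K:ℤ)) (K:ℤ)).erase 0, G (j + m))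
    rw [hCdef]
    linarith
  have habs : Tendsto (fun n : ℕ =>
      |(δ * L / α +
        (∑ i ∈ Finset.Icc (-(n:ℤ)) (n:ℤ),
          (φ ((x - i) / a) + δ * ψ ((x - i) / a))) - n) - x|) atTop (nhds |l - x|) :=
    (hl.sub_const x).abs
  exact le_of_tendsto habs (eventually_atTop.2 ⟨N, main⟩)
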